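/- Let F be a field, let n ≥ 2, and fix k ≥ 1. Let q(x) = x^t + a_{t−1}x^{t−1} + ⋯ + a_0 ∈ F[x] be a monic polynomial of degree t with q(0) = a_0 ≠ 0, and let B ∈ M_n(F) be the block-diagonal matrix whose top-left t × t block is the companion matrix C(q) and whose remaining (n−t) × (n−t) block is zero. If n − t ≤ t(k − 1), then there exists a matrix N_B ∈ M_n(F) with N_B^k = 0 such that B + N_B is invertible. -/
import Mathlib

/-- Let `q(x) = x^t + a_{t-1}x^{t-1} + ⋯ + a_0 ∈ F[x]` be monic of degree `t ≥ 1` with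
`q(0) = a_0 ≠ 0`, and let `B ∈ Mₙ(F)` (with `n ≥ 2`, `k ≥ 1`, `t ≤ n`) be the
block-diagonal matrix whose top-left `t × t` block is the companion matrix `C(q)`
(subdiagonal entries `1`, last column `(-a_0, …, -a_{t-1})ᵀ`, all other entries `0`)
and whose remaining `(n-t) × (n-t)` block is zero. If `n - t ≤ t * (k - 1)`, then
there exists `N_B ∈ Mₙ(F)` with `N_B ^ k = 0` such that `B + N_B` is invertible. -/
theorem exists_nilpotent_add_companion_block_isUnit
    (F : Type*) [Field F] (n k t : ℕ) (hn : 2 ≤ n) (hk : 1 ≤ k)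
    (ht : 1 ≤ t) (htn : t ≤ n)
    (q : Polynomial F) (hq : q.Monic) (hdeg : q.natDegree = t) (hq0 : q.coeff 0 ≠ 0)
    (hcond : n - t ≤ t * (k - 1))
    (B : Matrix (Fin n) (Fin n) F)
    (hB : B = Matrix.of fun i j : Fin n =>
      if (i : ℕ) < t ∧ (j : ℕ) < t then
        (if (i : ℕ) = (j : ℕ) + 1 then 1 else 0)
          + (if (j : ℕ) = t - 1 then -q.coeff i else 0)
      else 0) :
    ∃ N : Matrix (Fin n) (Fin n) F, N ^ k = 0 ∧ IsUnit (B + N) := by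
  have hBapp : ∀ i j : Fin n, B i j =
      if (i : ℕ) < t ∧ (j : ℕ) < t then
        (if (i : ℕ) = (j : ℕ) + 1 then 1 else 0)
          + (if (j : ℕ) = t - 1 then -q.coeff i else 0)
      else 0 := by intro i j; rw [hB]; rfl
  have hBrow : ∀ (a : ℕ) (ha : a < n) (x : Fin n), B ⟨a, ha⟩ x =
      if a < t ∧ (x : ℕ) < t then
        (if a = (x : ℕ) + 1 then 1 else 0) + (if (x : ℕ) = t - 1 then -q.coeff a else 0)
      else 0 := by
    intro a ha x; rw [hBapp]
  have hBval : ∀ (a b : ℕ) (ha : a < n) (hb2 : b < n), B ⟨a, ha⟩ ⟨b, hb2⟩ =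
      if a < t ∧ b < t then
        (if a = b + 1 then 1 else 0) + (if b = t - 1 then -q.coeff a else 0)
      else 0 := by
    intro a b ha hb2; rw [hBapp]
  have htk : n ≤ k * t := by
    have h1 : t * k = t * (k - 1) + t := by
      conv_lhs => rw [show k = (k-1)+1 by omega]
      rw [Nat.mul_succ]
    have h2 : k * t = t * k := Nat.mul_comm _ _
    omega
  -- helper: if t ≤ a then t + a % t ≤ a
  have hmod : ∀ a : ℕ, t ≤ a → t + a % t ≤ a := by
    intro a ha
    have h2 : t * (a / t) + a % t = a := Nat.div_add_mod a t
    have h3 : 1 ≤ a / t := (Nat.one_le_div_iff (by omega)).2 ha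
    have h4 : t * 1 ≤ t * (a / t) := Nat.mul_le_mul_left t h3
    omega
  -- uniqueness of chain ends
  have huniq : ∀ a b : ℕ, a % t = b % t → n ≤ a + t → n ≤ b + t → a < n → b < n → a = b := by
    intro a b h1 h2 h3 h4 h5
    rcases le_total a b with h | h
    · have hd : t ∣ b - a := (Nat.modEq_iff_dvd' h).1 h1
      have := Nat.eq_zero_of_dvd_of_lt hd
      omega
    · have hd : t ∣ a - b := (Nat.modEq_iff_dvd' h).1 h1.symm
      have := Nat.eq_zero_of_dvd_of_lt hd
      omega
  set G : Matrix (Fin n) (Fin n) F :=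
    Matrix.of (fun i j : Fin n => if (i : ℕ) = (j : ℕ) + t then (1:F) else 0) with hGdef
  set R : Matrix (Fin n) (Fin n) F :=
    Matrix.of (fun i j : Fin n =>
      if (i : ℕ) < t ∧ t ≤ (j : ℕ) ∧ n ≤ (j : ℕ) + t ∧ (j : ℕ) % t = (i : ℕ)
      then (1:F) else 0) with hRdef
  have hRR : R * R = 0 := by
    ext i j
    simp only [Matrix.mul_apply, Matrix.zero_apply, hRdef, Matrix.of_apply]
    apply Finset.sum_eq_zero
    intro x _
    by_cases h1 : (i : ℕ) < t ∧ t ≤ (x : ℕ) ∧ n ≤ (x : ℕ) + t ∧ (x : ℕ) % t = (i : ℕ)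
    · by_cases h2 : (x : ℕ) < t ∧ t ≤ (j : ℕ) ∧ n ≤ (j : ℕ) + t ∧ (j : ℕ) % t = (x : ℕ)
      · omega
      · simp [h2]
    · simp [h1]
  have hRB : R * B = 0 := by
    ext i j
    simp only [Matrix.mul_apply, Matrix.zero_apply, hRdef, Matrix.of_apply, hBapp]
    apply Finset.sum_eq_zero
    intro x _
    by_cases h1 : (i : ℕ) < t ∧ t ≤ (x : ℕ) ∧ n ≤ (x : ℕ) + t ∧ (x : ℕ) % t = (i : ℕ)
    · have h2 : ¬ ((x : ℕ) < t ∧ (j : ℕ) < t) := by omega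
      simp [h2]
    · simp [h1]
  have hQQi : (1 + R) * (1 - R) = 1 := by
    have h : (1 + R) * (1 - R) = 1 - R * R := by noncomm_ring
    rw [h, hRR, sub_zero]
  have hQiQ : (1 - R) * (1 + R) = 1 := by
    have h : (1 - R) * (1 + R) = 1 - R * R := by noncomm_ring
    rw [h, hRR, sub_zero]
  -- powers of G
  have hGpow : ∀ s : ℕ, G ^ s =
      Matrix.of (fun i j : Fin n => if (i : ℕ) = (j : ℕ) + s * t then (1:F) else 0) := by
    intro s
    induction s with
    | zero =>
      ext i j
      simp [Matrix.one_apply, Fin.ext_iff, eq_comm]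
    | succ s ih =>
      rw [pow_succ, ih]
      ext i j
      simp only [Matrix.mul_apply, hGdef, Matrix.of_apply]
      by_cases hjt : (j : ℕ) + t < n
      · rw [Fintype.sum_eq_single (⟨(j : ℕ) + t, hjt⟩ : Fin n)]
        · have e1 : ((⟨(j : ℕ) + t, hjt⟩ : Fin n) : ℕ) = (j : ℕ) + t := rfl
          have e2 : (j : ℕ) + t + s * t = (j : ℕ) + (s + 1) * t := by ring
          simp [e1, e2]
        · intro x hx
          have hxx : ¬ ((x : ℕ) = (j : ℕ) + t) := by
            intro h; exact hx (Fin.ext h)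
          simp [hxx]
      · rw [Finset.sum_eq_zero, eq_comm, if_neg]
        · have e2 : (j : ℕ) + (s + 1) * t = ((j : ℕ) + t) + s * t := by ring
          have := i.isLt
          omega
        · intro x _
          have hxx : ¬ ((x : ℕ) = (j : ℕ) + t) := by
            have := x.isLt; omega
          simp [hxx]
  have hGk : G ^ k = 0 := by
    rw [hGpow k]
    ext i j
    have : ¬ ((i : ℕ) = (j : ℕ) + k * t) := by
      have := i.isLt; omega
    simp [this]
  -- the nilpotent matrix
  refine ⟨(1 + R) * G * (1 - R), ?_, ?_⟩
  · -- nilpotency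
    let u : (Matrix (Fin n) (Fin n) F)ˣ := ⟨1 + R, 1 - R, hQQi, hQiQ⟩
    have h1 : ((u : Matrix (Fin n) (Fin n) F) * G * (↑u⁻¹ : Matrix (Fin n) (Fin n) F)) ^ k
        = (u : Matrix (Fin n) (Fin n) F) * G ^ k * (↑u⁻¹ : Matrix (Fin n) (Fin n) F) :=
      u.conj_pow G k
    have h2 : ((1 + R) * G * (1 - R)) ^ k = (1 + R) * G ^ k * (1 - R) := h1
    rw [h2, hGk, mul_zero, zero_mul]
  · -- invertibility
    set M' : Matrix (Fin n) (Fin n) F := B + B * R + G with hM'def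
    have hM'unit : IsUnit M' := by
      rw [Matrix.isUnit_iff_isUnit_det, isUnit_iff_ne_zero]
      intro hdet
      obtain ⟨v, hv0, hv⟩ := Matrix.exists_mulVec_eq_zero_iff.2 hdet
      apply hv0
      set w : Fin n → F := v + R.mulVec v with hwdef
      -- row equations
      have hrow : ∀ i, (B.mulVec w) i + (G.mulVec v) i = 0 := by
        intro i
        have h := congrFun hv i
        have h2 : M'.mulVec v = B.mulVec w + G.mulVec v := by
          rw [hM'def, Matrix.add_mulVec, Matrix.add_mulVec, hwdef, Matrix.mulVec_add,
            Matrix.mulVec_mulVec]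
        rw [h2] at h
        simpa using h
      have hBrow0 : ∀ (y : Fin n → F) (i : Fin n), t ≤ (i : ℕ) → (B.mulVec y) i = 0 := by
        intro y i hi
        simp only [Matrix.mulVec, dotProduct]
        apply Finset.sum_eq_zero
        intro x _
        have h2 : ¬ ((i : ℕ) < t ∧ (x : ℕ) < t) := by omega
        rw [hBapp, if_neg h2, zero_mul]
      have hGv : ∀ (i j : Fin n), (i : ℕ) = (j : ℕ) + t → (G.mulVec v) i = v j := by
        intro i j hij
        simp only [Matrix.mulVec, dotProduct, hGdef, Matrix.of_apply]
        rw [Fintype.sum_eq_single j]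
        · rw [if_pos hij, one_mul]
        · intro x hx
          have hxx : ¬ ((i : ℕ) = (x : ℕ) + t) := by
            intro h
            exact hx (Fin.ext (by omega))
          simp [hxx]
      have hGv0 : ∀ (i : Fin n), (i : ℕ) < t → (G.mulVec v) i = 0 := by
        intro i hi
        simp only [Matrix.mulVec, dotProduct, hGdef, Matrix.of_apply]
        apply Finset.sum_eq_zero
        intro x _
        have hxx : ¬ ((i : ℕ) = (x : ℕ) + t) := by omega
        simp [hxx]
      -- step A: v vanishes below n - t
      have ha : ∀ j : Fin n, (j : ℕ) + t < n → v j = 0 := by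
        intro j hj
        have h1 := hrow ⟨(j : ℕ) + t, hj⟩
        rw [hBrow0 w _ (by simp), hGv _ j rfl] at h1
        simpa using h1
      -- step B
      have hb : B.mulVec w = 0 := by
        funext i
        by_cases hi : (i : ℕ) < t
        · have h1 := hrow i
          rw [hGv0 i hi] at h1
          simpa using h1
        · simpa using hBrow0 w i (by omega)
      -- step C: companion injectivity
      have hwt : w ⟨t - 1, by omega⟩ = 0 := by
        have h0 := congrFun hb (⟨0, by omega⟩ : Fin n)
        simp only [Matrix.mulVec, dotProduct, Pi.zero_apply] at h0
        rw [Fintype.sum_eq_single (⟨t - 1, by omega⟩ : Fin n)] at h0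
        · rw [hBval 0 (t - 1) (by omega) (by omega),
            if_pos (show 0 < t ∧ t - 1 < t by omega),
            if_neg (show ¬ (0 = (t - 1) + 1) by omega), if_pos rfl, zero_add] at h0
          rcases mul_eq_zero.1 h0 with h4 | h4
          · exact absurd (neg_eq_zero.1 h4) hq0
          · exact h4
        · intro x hx
          have hxx : ¬ ((x : ℕ) = t - 1) := by
            intro h; exact hx (Fin.ext h)
          rw [hBrow 0 (by omega) x]
          by_cases hcnd : 0 < t ∧ (x : ℕ) < t
          · rw [if_pos hcnd, if_neg (by omega), if_neg hxx, add_zero, zero_mul]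
          · rw [if_neg hcnd, zero_mul]
      have hw : ∀ c : Fin n, (c : ℕ) < t → w c = 0 := by
        intro c hc
        by_cases hct : (c : ℕ) = t - 1
        · have : c = ⟨t - 1, by omega⟩ := Fin.ext hct
          rw [this]; exact hwt
        · have hi1 : (c : ℕ) + 1 < t := by omega
          have h1 := congrFun hb (⟨(c : ℕ) + 1, by omega⟩ : Fin n)
          simp only [Matrix.mulVec, dotProduct, Pi.zero_apply] at h1
          rw [Fintype.sum_eq_add c (⟨t - 1, by omega⟩ : Fin n)
            (by intro h; exact hct (by rw [h])) ?side] at h1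
          case side =>
            intro x hx
            rw [hBrow ((c : ℕ) + 1) (by omega) x]
            have hx1 : ¬ ((x : ℕ) = t - 1) := by
              intro h; exact hx.2 (Fin.ext h)
            have hx2 : ¬ ((c : ℕ) + 1 = (x : ℕ) + 1) := by
              intro h
              exact hx.1 (Fin.ext (by omega))
            by_cases hcnd : (c : ℕ) + 1 < t ∧ (x : ℕ) < t
            · rw [if_pos hcnd, if_neg hx2, if_neg hx1]; simp
            · rw [if_neg hcnd, zero_mul]
          rw [hBrow ((c : ℕ) + 1) (by omega) c,
            hBval ((c : ℕ) + 1) (t - 1) (by omega) (by omega),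
            if_pos (show (c : ℕ) + 1 < t ∧ (c : ℕ) < t by omega), if_pos rfl,
            if_neg hct,
            if_pos (show (c : ℕ) + 1 < t ∧ t - 1 < t by omega),
            if_neg (show ¬ ((c : ℕ) + 1 = (t - 1) + 1) by omega), if_pos rfl, hwt] at h1
          simpa using h1
      -- step D/E : v = 0
      have hRv0 : ∀ c : Fin n, n ≤ (c : ℕ) + t → (R.mulVec v) c = 0 := by
        intro c hcn
        simp only [Matrix.mulVec, dotProduct, hRdef, Matrix.of_apply]
        apply Finset.sum_eq_zero
        intro x _
        have hxx : ¬ ((c : ℕ) < t ∧ t ≤ (x : ℕ) ∧ n ≤ (x : ℕ) + t ∧ (x : ℕ) % t = (c : ℕ)) := by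
          rintro ⟨h1, h2, h3, h4⟩
          have h5 := hmod (x : ℕ) h2
          have := x.isLt
          omega
        simp [hxx]
      funext j
      simp only [Pi.zero_apply]
      by_cases h1 : (j : ℕ) + t < n
      · exact ha j h1
      · by_cases h2 : (j : ℕ) < t
        · have h3 := hw j h2
          have h4 := hRv0 j (by omega)
          rw [hwdef] at h3
          simp only [Pi.add_apply] at h3
          rw [h4, add_zero] at h3
          exact h3
        · -- j ≥ t and j + t ≥ n
          have hjt : t ≤ (j : ℕ) := by omega
          have hcmod : (j : ℕ) % t < t := Nat.mod_lt _ (by omega)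
          set c : Fin n := ⟨(j : ℕ) % t, by omega⟩ with hcdef
          have hcj : t + (j : ℕ) % t ≤ (j : ℕ) := hmod _ hjt
          have hct : (c : ℕ) + t < n := by
            have := j.isLt
            have e : (c : ℕ) = (j : ℕ) % t := rfl
            omega
          have hvc : v c = 0 := ha c hct
          have hwc : w c = 0 := hw c (by exact hcmod)
          have hRc : (R.mulVec v) c = v j := by
            simp only [Matrix.mulVec, dotProduct, hRdef, Matrix.of_apply]
            rw [Fintype.sum_eq_single j]
            · rw [if_pos ⟨hcmod, hjt, by omega, rfl⟩, one_mul]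
            · intro x hx
              by_cases hcnd : (c : ℕ) < t ∧ t ≤ (x : ℕ) ∧ n ≤ (x : ℕ) + t ∧ (x : ℕ) % t = (c : ℕ)
              · exfalso
                apply hx
                apply Fin.ext
                exact huniq (x : ℕ) (j : ℕ) (by rw [hcnd.2.2.2]) hcnd.2.2.1 (by omega)
                  x.isLt j.isLt
              · simp [hcnd]
          rw [hwdef] at hwc
          simp only [Pi.add_apply] at hwc
          rw [hvc, hRc, zero_add] at hwc
          exact hwc
    -- assemble
    have e0 : (1 + R) * B = B := by rw [add_mul, one_mul, hRB, add_zero]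
    have hM'2 : M' = B * (1 + R) + G := by rw [hM'def]; noncomm_ring
    have hfact : (1 + R) * M' * (1 - R) = B + (1 + R) * G * (1 - R) := by
      have h1 : (1 + R) * (B * (1 + R) + G) * (1 - R)
          = ((1 + R) * B) * ((1 + R) * (1 - R)) + (1 + R) * G * (1 - R) := by noncomm_ring
      rw [hM'2, h1, e0, hQQi, mul_one]
    rw [← hfact]
    have hu1 : IsUnit (1 + R) := ⟨⟨1 + R, 1 - R, hQQi, hQiQ⟩, rfl⟩
    have hu2 : IsUnit (1 - R) := ⟨⟨1 - R, 1 + R, hQiQ, hQQi⟩, rfl⟩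
    exact (hu1.mul hM'unit).mul hu2
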